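/- The number of permutations of [n] with m (r+1)-excedances ending in 1 equals the number of permutations of [n] with m r-excedances ending in n: the map sending σ to φ with φ(n) = n and φ(i) = σ(i) − 1 for i < n is a bijection between these sets. -/

import Mathlib

/-- Number of `r`-descents of a permutation `σ` of `[n]` (positions `i < n` with
`σ(i) ≥ σ(i+1) + r`), encoded on `Fin n`. -/
def rDesc (n r : ℕ) (σ : Equiv.Perm (Fin n)) : ℕ :=
  (Finset.univ.filter fun i : Fin n =>
    (if h : (i : ℕ) + 1 < n then ((σ ⟨(i : ℕ) + 1, h⟩ : Fin n) : ℕ) else n) + r ≤ (σ i : ℕ)).card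

/-- Number of `r`-excedances of a permutation `σ` of `[n]` (positions `i ≤ n` with
`σ(i) ≥ i + r`), encoded on `Fin n`. -/
def rExc (n r : ℕ) (σ : Equiv.Perm (Fin n)) : ℕ :=
  (Finset.univ.filter fun i : Fin n => (i : ℕ) + r ≤ (σ i : ℕ)).card

/-- The last value `σ(n)` of a permutation of `[n]` (as an element of `{1,…,n}`). -/
def lastVal (n : ℕ) (σ : Equiv.Perm (Fin n)) : ℕ :=
  if h : 0 < n then ((σ ⟨n - 1, Nat.sub_lt h Nat.one_pos⟩ : Fin n) : ℕ) + 1 else 0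

/-- `Ar r n m k` = number of permutations of `[n]` with exactly `m` `r`-descents
whose last value is `k`. -/
def Ar (r n m k : ℕ) : ℕ :=
  (Finset.univ.filter fun σ : Equiv.Perm (Fin n) => rDesc n r σ = m ∧ lastVal n σ = k).card

/-- The map sending `σ` to the function `φ` with `φ(n) = n` and `φ(i) = σ(i) - 1` for
`i < n`, encoded on `Fin n`. -/
def shiftMap (n : ℕ) (σ : Equiv.Perm (Fin n)) : Fin n → Fin n :=
  fun i =>
    if (i : ℕ) = n - 1 then i
    else ⟨(σ i : ℕ) - 1, lt_of_le_of_lt (Nat.sub_le _ _) (σ i).isLt⟩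

lemma rot_inv_apply (k : ℕ) (x : Fin (k+1)) : (finRotate (k+1))⁻¹ x = x - 1 := by
  rw [Equiv.Perm.inv_def, Equiv.symm_apply_eq, finRotate_succ_apply, sub_add_cancel]

lemma rot_inv_val (k : ℕ) (x : Fin (k+1)) :
    (((finRotate (k+1))⁻¹ x : Fin (k+1)) : ℕ) = if (x : ℕ) = 0 then k else (x : ℕ) - 1 := by
  rw [rot_inv_apply, Fin.coe_sub_one]
  simp only [Fin.ext_iff, Fin.val_zero]

lemma shiftMap_eq (k : ℕ) (σ : Equiv.Perm (Fin (k+1)))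
    (h0 : (σ ⟨k, k.lt_succ_self⟩ : ℕ) = 0) :
    shiftMap (k+1) σ = ⇑((finRotate (k+1))⁻¹ * σ) := by
  funext i
  simp only [shiftMap, Equiv.Perm.coe_mul, Function.comp_apply]
  by_cases hi : (i : ℕ) = k
  · have : i = ⟨k, k.lt_succ_self⟩ := Fin.ext hi
    subst this
    rw [if_pos (show ((⟨k, k.lt_succ_self⟩ : Fin (k+1)) : ℕ) = k+1-1 by simp), Fin.ext_iff,
      rot_inv_val, if_pos h0]
  · have hsi : (σ i : ℕ) ≠ 0 := by
      intro h
      apply hi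
      have : σ i = σ ⟨k, k.lt_succ_self⟩ := Fin.ext (by rw [h, h0])
      have := σ.injective this
      simpa [Fin.ext_iff] using this
    rw [if_neg (by simpa using hi), Fin.ext_iff, rot_inv_val, if_neg hsi]

lemma exc_eq (k r : ℕ) (hr : 1 ≤ r) (σ : Equiv.Perm (Fin (k+1)))
    (h0 : (σ ⟨k, k.lt_succ_self⟩ : ℕ) = 0) :
    rExc (k+1) r ((finRotate (k+1))⁻¹ * σ) = rExc (k+1) (r+1) σ := by
  unfold rExc
  congr 1
  apply Finset.filter_congr
  intro i _
  simp only [Equiv.Perm.coe_mul, Function.comp_apply, rot_inv_val]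
  by_cases hsi : (σ i : ℕ) = 0
  · have : i = ⟨k, k.lt_succ_self⟩ := σ.injective (Fin.ext (by rw [hsi, h0]))
    have hik : (i : ℕ) = k := by rw [this]
    rw [if_pos hsi, hsi, hik]
    omega
  · simp only [if_neg hsi]
    have : 1 ≤ (σ i : ℕ) := Nat.one_le_iff_ne_zero.mpr hsi
    constructor <;> intro h <;> omega

/-- The map `σ ↦ φ`, `φ(n) = n`, `φ(i) = σ(i) - 1` for `i < n`, is a bijection from the
permutations of `[n]` with `m` `(r+1)`-excedances ending in `1` onto the permutations of
`[n]` with `m` `r`-excedances ending in `n`. -/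
theorem stmt5 (n m r : ℕ) (hn : 1 ≤ n) (hm : 1 ≤ m) (hr : 1 ≤ r) :
    Set.BijOn (shiftMap n)
      {σ : Equiv.Perm (Fin n) | rExc n (r + 1) σ = m ∧ lastVal n σ = 1}
      {f : Fin n → Fin n |
        ∃ φ : Equiv.Perm (Fin n), ⇑φ = f ∧ rExc n r φ = m ∧ lastVal n φ = n} := by
  rcases n with _ | k
  · omega
  have hlast : ∀ σ : Equiv.Perm (Fin (k+1)), lastVal (k+1) σ = (σ ⟨k, k.lt_succ_self⟩ : ℕ) + 1 := by
    intro σ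
    simp [lastVal]
  refine ⟨?_, ?_, ?_⟩
  · rintro σ ⟨hexc, hlv⟩
    rw [hlast] at hlv
    have h0 : (σ ⟨k, k.lt_succ_self⟩ : ℕ) = 0 := by omega
    refine ⟨(finRotate (k+1))⁻¹ * σ, (shiftMap_eq k σ h0).symm, ?_, ?_⟩
    · rw [exc_eq k r hr σ h0, hexc]
    · rw [hlast]
      simp only [Equiv.Perm.coe_mul, Function.comp_apply]
      rw [rot_inv_val, if_pos h0]
  · rintro σ ⟨hexc, hlv⟩ τ ⟨hexc', hlv'⟩ heq
    rw [hlast] at hlv hlv'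
    have h0σ : (σ ⟨k, k.lt_succ_self⟩ : ℕ) = 0 := by omega
    have h0τ : (τ ⟨k, k.lt_succ_self⟩ : ℕ) = 0 := by omega
    rw [shiftMap_eq k σ h0σ, shiftMap_eq k τ h0τ] at heq
    have := Equiv.coe_fn_injective heq
    exact mul_left_cancel this
  · rintro f ⟨φ, hφ, hexc, hlv⟩
    rw [hlast] at hlv
    have hφk : φ ⟨k, k.lt_succ_self⟩ = ⟨k, k.lt_succ_self⟩ := by
      have hv : ((φ ⟨k, k.lt_succ_self⟩ : Fin (k+1)) : ℕ) = k := by omega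
      exact Fin.ext hv
    refine ⟨finRotate (k+1) * φ, ⟨?_, ?_⟩, ?_⟩
    · have h0 : ((finRotate (k+1) * φ) ⟨k, k.lt_succ_self⟩ : ℕ) = 0 := by
        simp only [Equiv.Perm.coe_mul, Function.comp_apply, hφk, finRotate_succ_apply]
        rw [Fin.val_add_one]
        simp [Fin.last, Fin.ext_iff]
      have hsimp : (finRotate (k+1))⁻¹ * (finRotate (k+1) * φ) = φ := by
        rw [← mul_assoc, inv_mul_cancel, one_mul]
      rw [← exc_eq k r hr _ h0, hsimp, hexc]
    · rw [hlast]
      simp only [Equiv.Perm.coe_mul, Function.comp_apply, hφk, finRotate_succ_apply]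
      rw [Fin.val_add_one]
      simp [Fin.last, Fin.ext_iff]
    · have h0 : ((finRotate (k+1) * φ) ⟨k, k.lt_succ_self⟩ : ℕ) = 0 := by
        simp only [Equiv.Perm.coe_mul, Function.comp_apply, hφk, finRotate_succ_apply]
        rw [Fin.val_add_one]
        simp [Fin.last, Fin.ext_iff]
      rw [shiftMap_eq k _ h0, ← mul_assoc, inv_mul_cancel, one_mul, hφ]
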